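/- Let θ > ℵ₁ be a regular cardinal, λ > θ regular, and suppose there is a club guessing sequence ⟨C_δ : δ ∈ S^λ_θ⟩ where each C_δ has order type θ. Then there is a club guessing sequence ⟨D_δ : δ ∈ S^λ_θ⟩ such that, with ⟨α^δ_i : i < θ⟩ the increasing enumeration of D_δ, for all i < θ of uncountable cofinality the ordinal α^δ_i also has uncountable cofinality. -/

import Mathlib

open Ordinal Set Cardinal

theorem cof_le_cof_bsup {i : Ordinal.{0}} (hi : Order.IsSuccLimit i) (f : Ordinal.{0} → Ordinal.{0})
    (hf : StrictMonoOn f (Set.Iio i)) :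
    i.cof ≤ (Ordinal.bsup.{0,0} i (fun j _ => f j)).cof := by
  set s := Ordinal.bsup.{0,0} i (fun j _ => f j) with hs
  have hlt : ∀ j, j < i → f j < s := fun j hj =>
    lt_of_lt_of_le (hf hj (hi.succ_lt hj) (Order.lt_succ j))
      (Ordinal.le_bsup _ _ (hi.succ_lt hj))
  obtain ⟨ι, F, hF, hcard⟩ := Ordinal.exists_lsub_cof s
  have hchoice : ∀ x : ι, ∃ j, j < i ∧ F x < f j := by
    intro x
    have h1 : F x < s := hF ▸ Ordinal.lt_lsub F x
    obtain ⟨j, hj, h⟩ := (Ordinal.lt_bsup _).1 h1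
    exact ⟨j, hj, h⟩
  choose g hg1 hg2 using hchoice
  have hkey : ∀ j, j < i → j < Ordinal.lsub g := by
    intro j hj
    have h1 : f (Order.succ j) < s := hlt _ (hi.succ_lt hj)
    rw [← hF] at h1
    obtain ⟨x, hx⟩ := Ordinal.lt_lsub_iff.1 h1
    have h2 : f (Order.succ j) < f (g x) := lt_of_le_of_lt hx (hg2 x)
    have h3 : Order.succ j < g x := (hf.lt_iff_lt (hi.succ_lt hj) (hg1 x)).1 h2
    exact lt_trans (lt_of_lt_of_le (Order.lt_succ j) h3.le) (Ordinal.lt_lsub g x)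
  have hlsub : Ordinal.lsub g = i :=
    le_antisymm (Ordinal.lsub_le hg1) (le_of_not_gt fun hcon => absurd (hkey _ hcon) (lt_irrefl _))
  calc i.cof = (Ordinal.lsub g).cof := by rw [hlsub]
    _ ≤ #ι := Ordinal.cof_lsub_le g
    _ = s.cof := hcard

/-- `C` is a club (closed unbounded) subset of the ordinal `δ`. -/
def IsClubIn (C : Set Ordinal) (δ : Ordinal) : Prop :=
  (∀ x ∈ C, x < δ) ∧
  (∀ α < δ, ∃ x ∈ C, α ≤ x) ∧
  (∀ α < δ, α ≠ 0 → (∀ β < α, ∃ x ∈ C, β < x ∧ x < α) → α ∈ C)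

theorem club_enum (θ : Cardinal.{0}) (hθreg : θ.IsRegular) (δ : Ordinal.{0}) (hδcof : δ.cof = θ)
    (F : Set Ordinal.{0}) (hF : IsClubIn F δ)
    (c : Ordinal.{0} → Ordinal.{0}) (hc : StrictMonoOn c (Set.Iio θ.ord))
    (hFc : F ⊆ c '' Set.Iio θ.ord)
    (hcu : ∀ α < δ, ∃ j < θ.ord, α ≤ c j) :
    StrictMono (enumOrd (F ∪ Set.Ici δ)) ∧
    (∀ i < θ.ord, enumOrd (F ∪ Set.Ici δ) i ∈ F) ∧
    (enumOrd (F ∪ Set.Ici δ) '' Set.Iio θ.ord = F) ∧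
    (∀ i, i < θ.ord → Order.IsSuccLimit i → i.cof ≤ (enumOrd (F ∪ Set.Ici δ) i).cof) := by
  set S := F ∪ Set.Ici δ with hS
  have hδlim : Order.IsSuccLimit δ := by
    rw [← Ordinal.aleph0_le_cof, hδcof]; exact hθreg.aleph0_le
  have hub : ¬ BddAbove S := by
    rintro ⟨b, hb⟩
    have h1 : max δ (Order.succ b) ∈ S := Set.mem_union_right _ (Set.mem_Ici.2 (le_max_left _ _))
    exact absurd ((Order.lt_succ b).trans_le (le_max_right _ _)) (not_lt.2 (hb h1))
  have hmono := Ordinal.enumOrd_strictMono hub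
  have hmemF : ∀ i, i < θ.ord → enumOrd S i ∈ F := by
    intro i
    induction i using Ordinal.induction with
    | h i IH =>
      intro hi
      set s := Ordinal.bsup.{0,0} i (fun j _ => Order.succ (enumOrd S j)) with hs
      have hsδ : s < δ := by
        apply Ordinal.bsup_lt_ord
        · rw [hδcof]; exact Cardinal.lt_ord.1 hi
        · intro j hj; exact hδlim.succ_lt (hF.1 _ (IH j hj (hj.trans hi)))
      obtain ⟨x, hxF, hx⟩ := hF.2.1 s hsδ
      have hxδ : x < δ := hF.1 x hxF
      have hle : enumOrd S i ≤ x := by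
        apply Ordinal.enumOrd_le_of_forall_lt (Set.mem_union_left _ hxF)
        intro j hj
        exact lt_of_lt_of_le (lt_of_lt_of_le (Order.lt_succ _) (Ordinal.le_bsup _ j hj)) hx
      rcases Ordinal.enumOrd_mem hub i with h | h
      · exact h
      · exact absurd (lt_of_le_of_lt hle hxδ) (not_lt.2 h)
  have hcge : ∀ j, j < θ.ord → c j ≤ enumOrd S j := by
    intro j
    induction j using Ordinal.induction with
    | h j IH =>
      intro hj
      obtain ⟨k, hk, hck⟩ := hFc (hmemF j hj)
      have hjk : j ≤ k := by
        by_contra hcon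
        push_neg at hcon
        have h2 := lt_of_le_of_lt (IH k hcon hk) (hmono hcon)
        rw [hck] at h2
        exact lt_irrefl _ h2
      calc c j ≤ c k := hc.monotoneOn hj hk hjk
        _ = enumOrd S j := hck
  have himg : enumOrd S '' Set.Iio θ.ord = F := by
    apply Set.eq_of_subset_of_subset
    · rintro _ ⟨i, hi, rfl⟩; exact hmemF i hi
    · intro x hxF
      have hxδ : x < δ := hF.1 x hxF
      obtain ⟨j, hjθ, hj⟩ := hcu (Order.succ x) (hδlim.succ_lt hxδ)
      have h2 : x < enumOrd S j := lt_of_lt_of_le (lt_of_lt_of_le (Order.lt_succ x) hj) (hcge j hjθ)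
      obtain ⟨k, hk⟩ := Ordinal.enumOrd_surjective hub (Set.mem_union_left _ hxF)
      refine ⟨k, ?_, hk⟩
      have h3 : k < j := hmono.lt_iff_lt.1 (by rw [hk]; exact h2)
      exact h3.trans hjθ
  have hcont : ∀ i, i < θ.ord → Order.IsSuccLimit i →
      enumOrd S i = Ordinal.bsup.{0,0} i (fun j _ => enumOrd S j) := by
    intro i hiθ hilim
    set s := Ordinal.bsup.{0,0} i (fun j _ => enumOrd S j) with hs
    have h1 : ∀ j, j < i → enumOrd S j < s := fun j hj =>
      lt_of_lt_of_le (hmono (Order.lt_succ j)) (Ordinal.le_bsup _ _ (hilim.succ_lt hj))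
    have hsδ : s < δ := by
      apply Ordinal.bsup_lt_ord
      · rw [hδcof]; exact Cardinal.lt_ord.1 hiθ
      · intro j hj; exact hF.1 _ (hmemF j (hj.trans hiθ))
    have hs0 : s ≠ 0 :=
      pos_iff_ne_zero.1 (lt_of_le_of_lt zero_le (h1 0 hilim.pos))
    have hsF : s ∈ F := by
      apply hF.2.2 s hsδ hs0
      intro β hβ
      obtain ⟨j, hj, hβj⟩ := (Ordinal.lt_bsup _).1 hβ
      exact ⟨enumOrd S j, hmemF j (hj.trans hiθ), hβj, h1 j hj⟩
    obtain ⟨k, hk⟩ := Ordinal.enumOrd_surjective hub (Set.mem_union_left _ hsF)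
    have hik : i ≤ k := by
      by_contra hcon
      push_neg at hcon
      have h2 := h1 k hcon
      rw [hk] at h2
      exact lt_irrefl _ h2
    have hle : enumOrd S i ≤ s := by rw [← hk]; exact hmono.monotone hik
    exact le_antisymm hle (Ordinal.bsup_le fun j hj => (hmono hj).le)
  refine ⟨hmono, hmemF, himg, fun i hiθ hilim => ?_⟩
  rw [hcont i hiθ hilim]
  exact cof_le_cof_bsup hilim _ (hmono.strictMonoOn _)

/-- Let `θ > ℵ₁` and `λ > θ` be regular cardinals, and suppose
`⟨C_δ : δ ∈ S^λ_θ⟩` is a club guessing sequence with each `C_δ` of order type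
`θ`.  Then there is a club guessing sequence `⟨D_δ : δ ∈ S^λ_θ⟩` such that,
with `⟨α^δ_i : i < θ⟩` the increasing enumeration of `D_δ`, whenever `i < θ`
has uncountable cofinality then so does `α^δ_i`. -/
theorem stmt6 (θ lam : Cardinal.{0}) (hθreg : θ.IsRegular) (hlamreg : lam.IsRegular)
    (hθ : Cardinal.aleph 1 < θ) (hθlam : θ < lam)
    (C : Ordinal.{0} → Set Ordinal.{0})
    (hclub : ∀ δ, δ < lam.ord → Ordinal.cof δ = θ → IsClubIn (C δ) δ)
    (htype : ∀ δ, δ < lam.ord → Ordinal.cof δ = θ →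
      ∃ e : Ordinal → Ordinal, StrictMonoOn e (Set.Iio θ.ord) ∧
        e '' Set.Iio θ.ord = C δ)
    (hguess : ∀ E : Set Ordinal, IsClubIn E lam.ord →
      ∃ δ, δ < lam.ord ∧ Ordinal.cof δ = θ ∧ C δ ⊆ E) :
    ∃ D : Ordinal.{0} → Set Ordinal.{0},
      (∀ δ, δ < lam.ord → Ordinal.cof δ = θ → IsClubIn (D δ) δ) ∧
      (∀ E : Set Ordinal, IsClubIn E lam.ord →
        ∃ δ, δ < lam.ord ∧ Ordinal.cof δ = θ ∧ D δ ⊆ E) ∧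
      ∀ δ, δ < lam.ord → Ordinal.cof δ = θ →
        ∃ e : Ordinal → Ordinal, StrictMonoOn e (Set.Iio θ.ord) ∧
          e '' Set.Iio θ.ord = D δ ∧
          ∀ i < θ.ord, Ordinal.cof i ≠ Cardinal.aleph0 →
            Ordinal.cof (e i) ≠ Cardinal.aleph0 := by
  classical
  set D : Ordinal.{0} → Set Ordinal.{0} := fun δ =>
    {x | x < δ ∧ ((x ∈ C δ ∧ x.cof ≠ Cardinal.aleph0) ∨
      (x ≠ 0 ∧ ∀ β < x, ∃ y ∈ C δ, y.cof ≠ Cardinal.aleph0 ∧ β < y ∧ y < x))} with hDdef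
  have hDsub : ∀ δ, δ < lam.ord → Ordinal.cof δ = θ → D δ ⊆ C δ := by
    intro δ hδ1 hδ2 x hx
    obtain ⟨hxδ, hor⟩ := hx
    rcases hor with h | h
    · exact h.1
    · exact (hclub δ hδ1 hδ2).2.2 x hxδ h.1 fun β hβ => by
        obtain ⟨y, hyC, _, hβy, hyx⟩ := h.2 β hβ
        exact ⟨y, hyC, hβy, hyx⟩
  have key : ∀ δ, δ < lam.ord → Ordinal.cof δ = θ →
      IsClubIn (D δ) δ ∧
      (∃ e : Ordinal → Ordinal, StrictMonoOn e (Set.Iio θ.ord) ∧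
        e '' Set.Iio θ.ord = D δ ∧
        ∀ i < θ.ord, Ordinal.cof i ≠ Cardinal.aleph0 →
          Ordinal.cof (e i) ≠ Cardinal.aleph0) := by
    intro δ hδ1 hδ2
    obtain ⟨hC1, hC2, hC3⟩ := hclub δ hδ1 hδ2
    obtain ⟨c, hc, hcimg⟩ := htype δ hδ1 hδ2
    have hcu : ∀ α < δ, ∃ j < θ.ord, α ≤ c j := by
      intro α hα
      obtain ⟨x, hx, hαx⟩ := hC2 α hα
      rw [← hcimg] at hx
      obtain ⟨j, hj, rfl⟩ := hx
      exact ⟨j, hj, hαx⟩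
    obtain ⟨hmonoC, hmemC, himgC, hcofC⟩ :=
      club_enum θ hθreg δ hδ2 (C δ) ⟨hC1, hC2, hC3⟩ c hc hcimg.symm.subset hcu
    set e0 := enumOrd (C δ ∪ Set.Ici δ) with he0
    -- unboundedness of D δ
    have hDub : ∀ α < δ, ∃ x ∈ D δ, α ≤ x := by
      intro α hα
      obtain ⟨x, hx, hαx⟩ := hC2 α hα
      rw [← himgC] at hx
      obtain ⟨k, hkθ, rfl⟩ := hx
      set i := k + (Cardinal.aleph 1).ord with hi
      have hiθ : i < θ.ord := by
        rw [Cardinal.lt_ord, hi, Ordinal.card_add, Cardinal.card_ord]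
        exact Cardinal.add_lt_of_lt hθreg.aleph0_le (Cardinal.lt_ord.1 hkθ) hθ
      have hω1ne : (Cardinal.aleph 1).ord ≠ 0 := by
        rw [← Cardinal.ord_zero]
        exact fun h => absurd (Cardinal.ord_injective h) (Cardinal.aleph_pos 1).ne'
      have hcofi : i.cof = Cardinal.aleph 1 := by
        rw [hi, Ordinal.cof_add _ hω1ne]
        exact Cardinal.isRegular_aleph_one.cof_eq
      have hilim : Order.IsSuccLimit i := by
        rw [← Ordinal.aleph0_le_cof, hcofi]
        exact Cardinal.aleph0_le_aleph 1
      have hcofe : Cardinal.aleph 1 ≤ (e0 i).cof := by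
        rw [← hcofi]; exact hcofC i hiθ hilim
      have hne : (e0 i).cof ≠ Cardinal.aleph0 := by
        intro h
        rw [h] at hcofe
        exact absurd hcofe (not_le.2 Cardinal.aleph0_lt_aleph_one)
      have hmem : e0 i ∈ C δ := hmemC i hiθ
      refine ⟨e0 i, ⟨hC1 _ hmem, Or.inl ⟨hmem, hne⟩⟩, ?_⟩
      exact hαx.trans (hmonoC.monotone (le_add_of_nonneg_right zero_le))
    have hDclub : IsClubIn (D δ) δ := by
      refine ⟨fun x hx => hx.1, hDub, ?_⟩
      intro α hα hα0 hacc
      refine ⟨hα, Or.inr ⟨hα0, ?_⟩⟩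
      intro β hβ
      obtain ⟨x, hxD, hβx, hxα⟩ := hacc β hβ
      obtain ⟨hxδ, hor⟩ := hxD
      rcases hor with h | h
      · exact ⟨x, h.1, h.2, hβx, hxα⟩
      · obtain ⟨y, hyC, hycof, hβy, hyx⟩ := h.2 β hβx
        exact ⟨y, hyC, hycof, hβy, hyx.trans hxα⟩
    obtain ⟨hmonoD, hmemD, himgD, hcofD⟩ :=
      club_enum θ hθreg δ hδ2 (D δ) hDclub c hc
        ((hDsub δ hδ1 hδ2).trans hcimg.symm.subset) hcu
    set e := enumOrd (D δ ∪ Set.Ici δ) with he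
    refine ⟨hDclub, e, hmonoD.strictMonoOn _, himgD, ?_⟩
    intro i hiθ hicof
    rcases Ordinal.zero_or_succ_or_isSuccLimit i with rfl | ⟨j, rfl⟩ | hilim
    · obtain ⟨hlt, hor⟩ := hmemD 0 hiθ
      rcases hor with h | h
      · exact h.2
      · exfalso
        obtain ⟨y, hyC, hycof, _, hyx⟩ := h.2 0 (pos_iff_ne_zero.2 h.1)
        have hyD : y ∈ D δ := ⟨hyx.trans hlt, Or.inl ⟨hyC, hycof⟩⟩
        rw [← himgD] at hyD
        obtain ⟨k, _, rfl⟩ := hyD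
        exact absurd hyx (not_lt.2 (hmonoD.monotone (show (0 : Ordinal) ≤ k from zero_le)))
    · have hjθ : j < θ.ord := (Order.lt_succ j).trans hiθ
      obtain ⟨hlt, hor⟩ := hmemD _ hiθ
      rcases hor with h | h
      · exact h.2
      · exfalso
        obtain ⟨y, hyC, hycof, hjy, hyx⟩ := h.2 (e j) (hmonoD (Order.lt_succ j))
        have hyD : y ∈ D δ := ⟨hyx.trans hlt, Or.inl ⟨hyC, hycof⟩⟩
        rw [← himgD] at hyD
        obtain ⟨k, _, rfl⟩ := hyD
        have h1 : j < k := hmonoD.lt_iff_lt.1 hjy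
        have h2 : k < Order.succ j := hmonoD.lt_iff_lt.1 hyx
        exact absurd (Order.succ_le_of_lt h1) (not_le.2 h2)
    · have h1 : Cardinal.aleph0 < i.cof :=
        lt_of_le_of_ne (Ordinal.aleph0_le_cof.2 hilim) (Ne.symm hicof)
      exact (lt_of_lt_of_le h1 (hcofD i hiθ hilim)).ne'
  refine ⟨D, fun δ h1 h2 => (key δ h1 h2).1, ?_, fun δ h1 h2 => (key δ h1 h2).2⟩
  intro E hE
  obtain ⟨δ, h1, h2, h3⟩ := hguess E hE
  exact ⟨δ, h1, h2, (hDsub δ h1 h2).trans h3⟩
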